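/- Let E ⊆ ℝ^d be open and bounded with |E \ E_{2ε}| ≤ Cε for all small ε > 0, where E_{2ε} = {x ∈ E : dist(x, ∂E) > 2ε}, and let s ∈ (0,1). Then ∫_{E \ E_{2ε}} ∫_{|y-x| > 2ε} |y-x|^{-d-s} dy dx ≤ (C H^{d-1}(S^{d-1})/s) · 2^{-s} · ε^{1-s}, and in particular this quantity tends to 0 as ε → 0⁺. -/

import Mathlib

open MeasureTheory Filter

/-- Surface measure of the unit sphere `S^{d-1}` in `ℝ^d`. -/
noncomputable def sphereArea (d : ℕ) : ℝ :=
  d * Real.pi ^ ((d : ℝ) / 2) / Real.Gamma ((d : ℝ) / 2 + 1)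

open Set Metric

lemma sphereArea_nonneg (d : ℕ) : 0 ≤ sphereArea d := by
  unfold sphereArea
  have h1 : 0 ≤ Real.pi ^ ((d : ℝ) / 2) := Real.rpow_nonneg Real.pi_pos.le _
  have h2 : 0 < Real.Gamma ((d : ℝ) / 2 + 1) :=
    Real.Gamma_pos_of_pos (by positivity)
  positivity

lemma ball_vol_toReal (d : ℕ) (hd : 0 < d) :
    (volume (ball (0 : EuclideanSpace ℝ (Fin d)) 1)).toReal =
      Real.pi ^ ((d : ℝ) / 2) / Real.Gamma ((d : ℝ) / 2 + 1) := by
  haveI : Nonempty (Fin d) := ⟨⟨0, hd⟩⟩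
  rw [EuclideanSpace.volume_ball]
  have h2 : 0 < Real.Gamma ((Fintype.card (Fin d) : ℝ) / 2 + 1) :=
    Real.Gamma_pos_of_pos (by positivity)
  rw [ENNReal.ofReal_one, one_pow, one_mul, ENNReal.toReal_ofReal (by positivity)]
  rw [← Real.rpow_natCast (Real.sqrt Real.pi) (Fintype.card (Fin d)),
    Real.sqrt_eq_rpow, ← Real.rpow_mul Real.pi_pos.le]
  simp [Fintype.card_fin]
  ring_nf

lemma inner_integral_eq {d : ℕ} (hd : 0 < d) {s : ℝ} (hs0 : 0 < s) (hs1 : s < 1)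
    {R : ℝ} (hR : 0 < R) (x : EuclideanSpace ℝ (Fin d)) :
    ∫ y in {y : EuclideanSpace ℝ (Fin d) | R < ‖y - x‖}, ‖y - x‖ ^ (-(d : ℝ) - s) =
      sphereArea d * R ^ (-s) / s := by
  haveI : Nonempty (Fin d) := ⟨⟨0, hd⟩⟩
  haveI : Nontrivial (EuclideanSpace ℝ (Fin d)) := inferInstance
  set p : ℝ := -(d : ℝ) - s with hp
  set S : Set (EuclideanSpace ℝ (Fin d)) := {h | R < ‖h‖} with hS
  have hSm : MeasurableSet S :=
    measurableSet_lt measurable_const measurable_norm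
  have hTm : MeasurableSet {y : EuclideanSpace ℝ (Fin d) | R < ‖y - x‖} :=
    measurableSet_lt measurable_const ((measurable_id.sub_const x).norm)
  -- step 1: translate
  have step1 : ∫ y in {y : EuclideanSpace ℝ (Fin d) | R < ‖y - x‖}, ‖y - x‖ ^ p =
      ∫ h in S, ‖h‖ ^ p := by
    rw [← integral_indicator hTm, ← integral_indicator hSm]
    rw [← integral_sub_right_eq_self (S.indicator fun h => ‖h‖ ^ p) x]
    congr 1
  rw [step1]
  -- step 2: polar coordinates
  have step2 : ∫ h in S, ‖h‖ ^ p =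
      ∫ h : EuclideanSpace ℝ (Fin d), (Set.Ioi R).indicator (fun r => r ^ p) ‖h‖ := by
    rw [← integral_indicator hSm]
    congr 1
  rw [step2, integral_fun_norm_addHaar volume (fun r => (Set.Ioi R).indicator (fun r => r ^ p) r)]
  have hfr : Module.finrank ℝ (EuclideanSpace ℝ (Fin d)) = d := finrank_euclideanSpace_fin
  rw [hfr]
  -- compute the radial integral
  have hrad : ∫ r in Set.Ioi (0:ℝ), r ^ (d - 1) • (Set.Ioi R).indicator (fun r => r ^ p) r =
      R ^ (-s) / s := by
    have : ∀ r : ℝ, r ^ (d - 1) • (Set.Ioi R).indicator (fun r => r ^ p) r =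
        (Set.Ioi R).indicator (fun r => r ^ (d - 1) * r ^ p) r := by
      intro r
      simp [Set.indicator_apply, smul_eq_mul]
      try split <;> simp
    simp_rw [this]
    rw [setIntegral_indicator measurableSet_Ioi, Set.Ioi_inter_Ioi, max_eq_right hR.le]
    have hcongr : ∀ r ∈ Set.Ioi R, r ^ (d - 1) * r ^ p = r ^ (-1 - s) := by
      intro r hr
      have hr0 : 0 < r := hR.trans hr
      rw [← Real.rpow_natCast r (d - 1), ← Real.rpow_add hr0]
      congr 1
      rw [Nat.cast_sub hd, Nat.cast_one, hp]
      ring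
    rw [setIntegral_congr_fun measurableSet_Ioi hcongr,
      integral_Ioi_rpow_of_lt (by linarith) hR]
    rw [show (-1 - s + 1 : ℝ) = -s by ring]
    field_simp
  rw [hrad, measureReal_def, ball_vol_toReal d hd]
  unfold sphereArea
  rw [nsmul_eq_mul, smul_eq_mul]
  ring

/-- The collar estimate: the contribution of the `2ε`-collar of `∂E` paired with points at
distance `> 2ε` is bounded by `(C H^{d-1}(S^{d-1})/s) 2^{-s} ε^{1-s}` and hence vanishes
as `ε → 0⁺`. -/
theorem collar_estimate
    {d : ℕ} (hd : 0 < d) (E : Set (EuclideanSpace ℝ (Fin d)))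
    (hEopen : IsOpen E) (hEbdd : Bornology.IsBounded E)
    (s : ℝ) (hs : s ∈ Set.Ioo (0:ℝ) 1) (C ε₀ : ℝ) (hC : 0 < C) (hε₀ : 0 < ε₀)
    (hcollar : ∀ ε ∈ Set.Ioo (0:ℝ) ε₀,
      (volume (E \ {x ∈ E | 2 * ε < Metric.infDist x (frontier E)})).toReal ≤ C * ε) :
    (∀ ε ∈ Set.Ioo (0:ℝ) ε₀,
      (∫ x in E \ {x ∈ E | 2 * ε < Metric.infDist x (frontier E)},
          ∫ y in {y | 2 * ε < ‖y - x‖}, ‖y - x‖ ^ (-(d : ℝ) - s)) ≤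
        C * sphereArea d / s * 2 ^ (-s) * ε ^ (1 - s)) ∧
    Tendsto (fun ε : ℝ =>
        ∫ x in E \ {x ∈ E | 2 * ε < Metric.infDist x (frontier E)},
          ∫ y in {y | 2 * ε < ‖y - x‖}, ‖y - x‖ ^ (-(d : ℝ) - s))
      (nhdsWithin 0 (Set.Ioi 0)) (nhds 0) := by
  obtain ⟨hs0, hs1⟩ := hs
  have hσ : 0 ≤ sphereArea d := sphereArea_nonneg d
  -- the double integral equals (volume of collar).toReal * K for ε > 0
  have key : ∀ ε : ℝ, 0 < ε →
      (∫ x in E \ {x ∈ E | 2 * ε < Metric.infDist x (frontier E)},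
          ∫ y in {y | 2 * ε < ‖y - x‖}, ‖y - x‖ ^ (-(d : ℝ) - s)) =
        (volume (E \ {x ∈ E | 2 * ε < Metric.infDist x (frontier E)})).toReal *
          (sphereArea d * (2 * ε) ^ (-s) / s) := by
    intro ε hε
    have h2ε : 0 < 2 * ε := by linarith
    have : (∫ x in E \ {x ∈ E | 2 * ε < Metric.infDist x (frontier E)},
        ∫ y in {y | 2 * ε < ‖y - x‖}, ‖y - x‖ ^ (-(d : ℝ) - s)) =
        ∫ _x in E \ {x ∈ E | 2 * ε < Metric.infDist x (frontier E)},
          (sphereArea d * (2 * ε) ^ (-s) / s) := by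
      apply integral_congr_ae
      filter_upwards with x
      exact inner_integral_eq hd hs0 hs1 h2ε x
    rw [this, setIntegral_const, smul_eq_mul, measureReal_def]
  have hεbound : ∀ ε ∈ Set.Ioo (0:ℝ) ε₀,
      (∫ x in E \ {x ∈ E | 2 * ε < Metric.infDist x (frontier E)},
          ∫ y in {y | 2 * ε < ‖y - x‖}, ‖y - x‖ ^ (-(d : ℝ) - s)) ≤
        C * sphereArea d / s * 2 ^ (-s) * ε ^ (1 - s) := by
    intro ε hε
    obtain ⟨hε1, hε2⟩ := hε
    rw [key ε hε1]
    have hK : 0 ≤ sphereArea d * (2 * ε) ^ (-s) / s := by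
      have : (0:ℝ) ≤ (2 * ε) ^ (-s) := Real.rpow_nonneg (by linarith) _
      positivity
    calc (volume (E \ {x ∈ E | 2 * ε < Metric.infDist x (frontier E)})).toReal *
          (sphereArea d * (2 * ε) ^ (-s) / s)
        ≤ (C * ε) * (sphereArea d * (2 * ε) ^ (-s) / s) :=
          mul_le_mul_of_nonneg_right (hcollar ε ⟨hε1, hε2⟩) hK
      _ = C * sphereArea d / s * 2 ^ (-s) * ε ^ (1 - s) := by
          rw [Real.mul_rpow (by norm_num) hε1.le]
          rw [show (1 - s : ℝ) = 1 + (-s) by ring, Real.rpow_add hε1, Real.rpow_one]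
          field_simp
  refine ⟨hεbound, ?_⟩
  apply squeeze_zero'
  · filter_upwards [self_mem_nhdsWithin] with ε (hε : ε ∈ Set.Ioi (0:ℝ))
    rw [key ε hε]
    have : (0:ℝ) ≤ (2 * ε) ^ (-s) := Real.rpow_nonneg (by linarith [Set.mem_Ioi.mp hε]) _
    have h0 : (0:ℝ) ≤ (volume (E \ {x ∈ E | 2 * ε < Metric.infDist x (frontier E)})).toReal :=
      ENNReal.toReal_nonneg
    positivity
  · filter_upwards [Ioo_mem_nhdsGT_of_mem (Set.mem_Ico.mpr ⟨le_refl (0:ℝ), hε₀⟩)] with ε hε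
    exact hεbound ε hε
  · have hcont : ContinuousAt (fun ε : ℝ => ε ^ (1 - s)) 0 :=
      Real.continuousAt_rpow_const 0 (1 - s) (Or.inr (by linarith))
    have : Tendsto (fun ε : ℝ => ε ^ (1 - s)) (nhdsWithin 0 (Set.Ioi 0)) (nhds 0) := by
      have := hcont.continuousWithinAt (s := Set.Ioi (0:ℝ))
      rw [ContinuousWithinAt, Real.zero_rpow (by linarith)] at this
      exact this
    have := this.const_mul (C * sphereArea d / s * 2 ^ (-s))
    simpa using this
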